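/- Let $c(n,k)$ denote the unsigned Stirling numbers of the first kind ($c(n,k) = S_0(n,k)$, satisfying $c(n+1,k) = n\,c(n,k) + c(n,k-1)$). Then for each fixed $n$, the ratio $c(n-1,k-1)/c(n,k)$ is increasing in $k$ for $1 \le k \le n$. -/
import Mathlib


/-- Unsigned Stirling numbers of the first kind:
`c(n+1,k) = n c(n,k) + c(n,k-1)`, `c(0,0) = 1`, `c(n,0) = 0` for `n ≥ 1`,
`c(n,k) = 0` for `k > n`. -/
def stirlingFirst : ℕ → ℕ → ℕ
  | 0, k => if k = 0 then 1 else 0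
  | n + 1, k =>
      if k = 0 then 0
      else n * stirlingFirst n k + stirlingFirst n (k - 1)

lemma stirlingFirst_succ (n k : ℕ) :
    stirlingFirst (n + 1) (k + 1) = n * stirlingFirst n (k + 1) + stirlingFirst n k := by
  simp [stirlingFirst]

lemma stirlingFirst_Q : ∀ n k l, k ≤ l + 1 →
    stirlingFirst n k * stirlingFirst n (l + 2) ≤
      stirlingFirst n (k + 1) * stirlingFirst n (l + 1) := by
  intro n
  induction n with
  | zero => intro k l _; simp [stirlingFirst]
  | succ n ih =>
    intro k l hkl
    match k with
    | 0 => simp [stirlingFirst]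
    | k + 1 =>
      rw [stirlingFirst_succ n k, show l + 2 = (l + 1) + 1 from rfl,
        stirlingFirst_succ n (l + 1), show k + 1 + 1 = (k + 1) + 1 from rfl,
        stirlingFirst_succ n (k + 1), stirlingFirst_succ n l]
      have h1 := ih (k + 1) l (by omega)
      have h2 : stirlingFirst n k * stirlingFirst n (l + 2) ≤
          stirlingFirst n (k + 2) * stirlingFirst n l := by
        rcases Nat.lt_or_ge k l with h | h
        · obtain ⟨m, rfl⟩ : ∃ m, l = m + 1 := ⟨l - 1, by omega⟩
          calc stirlingFirst n k * stirlingFirst n (m + 1 + 2)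
              ≤ stirlingFirst n (k + 1) * stirlingFirst n (m + 2) := ih k (m + 1) (by omega)
            _ ≤ stirlingFirst n (k + 2) * stirlingFirst n (m + 1) := ih (k + 1) m (by omega)
        · have hkl' : k = l := by omega
          subst hkl'
          rw [Nat.mul_comm]
      have h3 : stirlingFirst n k * stirlingFirst n (l + 1) ≤
          stirlingFirst n (k + 1) * stirlingFirst n l := by
        match l with
        | 0 =>
          have hk0 : k = 0 := by omega
          subst hk0
          rw [Nat.mul_comm]
        | m + 1 => exact ih k m (by omega)
      simp only [show k + 1 + 1 = k + 2 from rfl, show l + 1 + 1 = l + 2 from rfl] at h1 ⊢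
      nlinarith [Nat.mul_le_mul_left (n * n) h1, Nat.mul_le_mul_left n h2, h3]

lemma stirlingFirst_pos : ∀ n k, 1 ≤ k → k ≤ n → 0 < stirlingFirst n k := by
  intro n
  induction n with
  | zero => intro k h1 h2; omega
  | succ n ih =>
    intro k h1 h2
    obtain ⟨k, rfl⟩ : ∃ m, k = m + 1 := ⟨k - 1, by omega⟩
    rw [stirlingFirst_succ]
    match k with
    | 0 =>
      rcases Nat.eq_zero_or_pos n with rfl | hn
      · simp [stirlingFirst]
      · have h := ih 1 le_rfl hn
        exact Nat.lt_of_lt_of_le (Nat.mul_pos hn h) (Nat.le_add_right _ _)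
    | k + 1 =>
      have := ih (k + 1) (by omega) (by omega)
      omega

/-- For fixed `n`, the ratio `c(n-1,k-1)/c(n,k)` is increasing in `k` on
`1 ≤ k ≤ n`. -/
theorem stirlingFirst_ratio_increasing (n k : ℕ) (hk1 : 1 ≤ k) (hkn : k + 1 ≤ n) :
    (stirlingFirst (n - 1) (k - 1) : ℝ) / stirlingFirst n k ≤
      (stirlingFirst (n - 1) k : ℝ) / stirlingFirst n (k + 1) := by
  obtain ⟨m, rfl⟩ : ∃ m, n = m + 1 := ⟨n - 1, by omega⟩
  obtain ⟨j, rfl⟩ : ∃ j, k = j + 1 := ⟨k - 1, by omega⟩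
  simp only [Nat.add_sub_cancel]
  have hd1 : 0 < stirlingFirst (m + 1) (j + 1) := stirlingFirst_pos _ _ (by omega) (by omega)
  have hd2 : 0 < stirlingFirst (m + 1) (j + 1 + 1) := stirlingFirst_pos _ _ (by omega) (by omega)
  rw [div_le_div_iff₀ (by exact_mod_cast hd1) (by exact_mod_cast hd2)]
  have key : stirlingFirst m j * stirlingFirst (m + 1) (j + 1 + 1) ≤
      stirlingFirst m (j + 1) * stirlingFirst (m + 1) (j + 1) := by
    rw [stirlingFirst_succ m (j + 1), stirlingFirst_succ m j]
    have hQ := stirlingFirst_Q m j j (by omega)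
    nlinarith [hQ]
  exact_mod_cast key
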